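/- arXiv:2509.08102 — 2 statements merged into one kernel-verified Lean document; each statement's English description precedes it below -/
import Mathlib

section
/- Let d ≥ 1, let p and q be probability density functions on ℝ^d (with respect to Lebesgue measure), and let R : ℝ^d → [0,1] be measurable with ∫ R(θ) p(θ) dθ > 0 and ∫ R(θ) q(θ) dθ > 0. Then |(∫ R p)²/(∫ R² p) − (∫ R q)²/(∫ R² q)| ≤ 3 (∫ |p(θ) − q(θ)| dθ) / (∫ R(θ)² q(θ) dθ). -/
open MeasureTheory

/-- **Stability of the RESS under total-variation perturbation of the
proposal density.** For probability densities `p`, `q` on `ℝ^d` and a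
measurable `R : ℝ^d → [0,1]` with `∫ R p > 0` and `∫ R q > 0`,
`|(∫ R p)²/(∫ R² p) − (∫ R q)²/(∫ R² q)| ≤ 3 (∫ |p − q|) / (∫ R² q)`. -/
theorem ress_tv_stability
    (d : ℕ) (hd : 1 ≤ d) (p q R : (Fin d → ℝ) → ℝ)
    (hp_meas : Measurable p) (hq_meas : Measurable q) (hR_meas : Measurable R)
    (hp_nonneg : ∀ θ, 0 ≤ p θ) (hq_nonneg : ∀ θ, 0 ≤ q θ)
    (hp_int : Integrable p) (hq_int : Integrable q)
    (hp_one : ∫ θ, p θ = 1) (hq_one : ∫ θ, q θ = 1)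
    (hR_nonneg : ∀ θ, 0 ≤ R θ) (hR_le_one : ∀ θ, R θ ≤ 1)
    (hRp_pos : 0 < ∫ θ, R θ * p θ) (hRq_pos : 0 < ∫ θ, R θ * q θ) :
    |(∫ θ, R θ * p θ) ^ 2 / (∫ θ, R θ ^ 2 * p θ)
        - (∫ θ, R θ * q θ) ^ 2 / (∫ θ, R θ ^ 2 * q θ)|
      ≤ 3 * (∫ θ, |p θ - q θ|) / (∫ θ, R θ ^ 2 * q θ) := by
  have mono_int : ∀ (f g : (Fin d → ℝ) → ℝ), Integrable g → Measurable f →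
      (∀ θ, 0 ≤ f θ) → (∀ θ, f θ ≤ g θ) → (∀ θ, 0 ≤ g θ) → Integrable f := by
    intro f g hg hf h0 hle hg0
    refine hg.mono hf.aestronglyMeasurable ?_
    filter_upwards with θ
    rw [Real.norm_eq_abs, Real.norm_eq_abs, abs_of_nonneg (h0 θ), abs_of_nonneg (hg0 θ)]
    exact hle θ
  have hRp_int : Integrable (fun θ => R θ * p θ) :=
    mono_int _ p hp_int (hR_meas.mul hp_meas)
      (fun θ => mul_nonneg (hR_nonneg θ) (hp_nonneg θ))
      (fun θ => mul_le_of_le_one_left (hp_nonneg θ) (hR_le_one θ)) hp_nonneg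
  have hRq_int : Integrable (fun θ => R θ * q θ) :=
    mono_int _ q hq_int (hR_meas.mul hq_meas)
      (fun θ => mul_nonneg (hR_nonneg θ) (hq_nonneg θ))
      (fun θ => mul_le_of_le_one_left (hq_nonneg θ) (hR_le_one θ)) hq_nonneg
  have hR2 : ∀ θ, R θ ^ 2 ≤ 1 := fun θ => pow_le_one₀ (hR_nonneg θ) (hR_le_one θ)
  have hR2_nonneg : ∀ θ, 0 ≤ R θ ^ 2 := fun θ => sq_nonneg _
  have hR2p_int : Integrable (fun θ => R θ ^ 2 * p θ) :=
    mono_int _ p hp_int ((hR_meas.pow_const 2).mul hp_meas)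
      (fun θ => mul_nonneg (hR2_nonneg θ) (hp_nonneg θ))
      (fun θ => mul_le_of_le_one_left (hp_nonneg θ) (hR2 θ)) hp_nonneg
  have hR2q_int : Integrable (fun θ => R θ ^ 2 * q θ) :=
    mono_int _ q hq_int ((hR_meas.pow_const 2).mul hq_meas)
      (fun θ => mul_nonneg (hR2_nonneg θ) (hq_nonneg θ))
      (fun θ => mul_le_of_le_one_left (hq_nonneg θ) (hR2 θ)) hq_nonneg
  set A := ∫ θ, R θ * p θ with hAdef
  set A' := ∫ θ, R θ * q θ with hA'def
  set B := ∫ θ, R θ ^ 2 * p θ with hBdef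
  set B' := ∫ θ, R θ ^ 2 * q θ with hB'def
  set ε := ∫ θ, |p θ - q θ| with hεdef
  have hε0 : 0 ≤ ε := integral_nonneg (fun θ => abs_nonneg _)
  have hεint : Integrable (fun θ => |p θ - q θ|) := (hp_int.sub hq_int).abs
  -- TV bounds
  have habs : ∀ (f : (Fin d → ℝ) → ℝ), Integrable (fun θ => f θ * p θ) →
      Integrable (fun θ => f θ * q θ) → (∀ θ, 0 ≤ f θ) → (∀ θ, f θ ≤ 1) →
      |(∫ θ, f θ * p θ) - ∫ θ, f θ * q θ| ≤ ε := by
    intro f hfp hfq h0 h1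
    rw [← integral_sub hfp hfq]
    calc |∫ θ, (f θ * p θ - f θ * q θ)| ≤ ∫ θ, |f θ * p θ - f θ * q θ| := by
          rw [← Real.norm_eq_abs]
          exact (norm_integral_le_integral_norm _).trans_eq (by simp [Real.norm_eq_abs])
      _ ≤ ε := by
          refine integral_mono (hfp.sub hfq).abs hεint (fun θ => ?_)
          have : f θ * p θ - f θ * q θ = f θ * (p θ - q θ) := by ring
          rw [this, abs_mul, abs_of_nonneg (h0 θ)]
          exact mul_le_of_le_one_left (abs_nonneg _) (h1 θ)
  have hAA' : |A - A'| ≤ ε := habs R hRp_int hRq_int hR_nonneg hR_le_one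
  have hBB' : |B - B'| ≤ ε :=
    habs (fun θ => R θ ^ 2) hR2p_int hR2q_int hR2_nonneg hR2
  -- A ≤ 1, A' ≤ 1
  have hA1 : A ≤ 1 := by
    rw [hAdef, ← hp_one]
    exact integral_mono hRp_int hp_int
      (fun θ => mul_le_of_le_one_left (hp_nonneg θ) (hR_le_one θ))
  have hA'1 : A' ≤ 1 := by
    rw [hA'def, ← hq_one]
    exact integral_mono hRq_int hq_int
      (fun θ => mul_le_of_le_one_left (hq_nonneg θ) (hR_le_one θ))
  -- Cauchy–Schwarz / variance: A² ≤ B, A'² ≤ B'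
  have hvar : ∀ (r : (Fin d → ℝ) → ℝ), Integrable r → (∀ θ, 0 ≤ r θ) →
      (∫ θ, r θ = 1) → Integrable (fun θ => R θ * r θ) →
      Integrable (fun θ => R θ ^ 2 * r θ) →
      (∫ θ, R θ * r θ) ^ 2 ≤ ∫ θ, R θ ^ 2 * r θ := by
    intro r hr hr0 hr1 hRr hR2r
    set a := ∫ θ, R θ * r θ with hadef
    have h0 : 0 ≤ ∫ θ, (R θ ^ 2 * r θ - 2 * a * (R θ * r θ) + a ^ 2 * r θ) := by
      refine integral_nonneg (fun θ => ?_)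
      have : R θ ^ 2 * r θ - 2 * a * (R θ * r θ) + a ^ 2 * r θ
          = (R θ - a) ^ 2 * r θ := by ring
      rw [this]
      exact mul_nonneg (sq_nonneg _) (hr0 θ)
    have i1 : Integrable (fun θ => R θ ^ 2 * r θ - 2 * a * (R θ * r θ)) :=
      hR2r.sub (hRr.const_mul (2 * a))
    have i2 : Integrable (fun θ => a ^ 2 * r θ) := hr.const_mul (a ^ 2)
    rw [integral_add i1 i2, integral_sub hR2r (hRr.const_mul (2 * a)),
        integral_const_mul, integral_const_mul, hr1, ← hadef] at h0
    nlinarith [h0]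
  have hA2B : A ^ 2 ≤ B := hvar p hp_int hp_nonneg hp_one hRp_int hR2p_int
  have hA'2B' : A' ^ 2 ≤ B' := hvar q hq_int hq_nonneg hq_one hRq_int hR2q_int
  have hBpos : 0 < B := lt_of_lt_of_le (pow_pos hRp_pos 2) hA2B
  have hB'pos : 0 < B' := lt_of_lt_of_le (pow_pos hRq_pos 2) hA'2B'
  -- key algebraic bound
  have hd1 : A - A' ≤ ε := (abs_le.mp hAA').2
  have hd2 : -(ε) ≤ A - A' := (abs_le.mp hAA').1
  have he1 : B - B' ≤ ε := (abs_le.mp hBB').2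
  have he2 : -(ε) ≤ B - B' := (abs_le.mp hBB').1
  have hsum2 : |A + A'| ≤ 2 := by
    rw [abs_of_nonneg (by linarith [hRp_pos, hRq_pos] : (0:ℝ) ≤ A + A')]
    linarith
  have w1 : |A ^ 2 - A' ^ 2| ≤ 2 * ε := by
    have hid : A ^ 2 - A' ^ 2 = (A - A') * (A + A') := by ring
    rw [hid, abs_mul]
    calc |A - A'| * |A + A'| ≤ ε * 2 :=
          mul_le_mul hAA' hsum2 (abs_nonneg _) hε0
      _ = 2 * ε := by ring
  have w2 : |A ^ 2 * (B' - B)| ≤ B * ε := by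
    rw [abs_mul, abs_of_nonneg (sq_nonneg A)]
    exact mul_le_mul hA2B (abs_sub_comm B B' ▸ hBB') (abs_nonneg _) hBpos.le
  have key : |A ^ 2 * B' - A' ^ 2 * B| ≤ 3 * ε * B := by
    have hid : A ^ 2 * B' - A' ^ 2 * B = B * (A ^ 2 - A' ^ 2) + A ^ 2 * (B' - B) := by
      ring
    calc |A ^ 2 * B' - A' ^ 2 * B|
        ≤ |B * (A ^ 2 - A' ^ 2)| + |A ^ 2 * (B' - B)| := by
          rw [hid]; exact abs_add_le _ _
      _ ≤ B * (2 * ε) + B * ε := by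
          refine add_le_add ?_ w2
          rw [abs_mul, abs_of_pos hBpos]
          exact mul_le_mul_of_nonneg_left w1 hBpos.le
      _ = 3 * ε * B := by ring
  have heq : A ^ 2 / B - A' ^ 2 / B' = (A ^ 2 * B' - A' ^ 2 * B) / (B * B') := by
    field_simp
  rw [heq, abs_div, abs_of_pos (mul_pos hBpos hB'pos),
    div_le_div_iff₀ (mul_pos hBpos hB'pos) hB'pos]
  calc |A ^ 2 * B' - A' ^ 2 * B| * B' ≤ (3 * ε * B) * B' :=
        mul_le_mul_of_nonneg_right key hB'pos.le
    _ = 3 * ε * (B * B') := by ring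
end

section
/- Let α ∈ (0,1), let p ≥ 1 be a real number, and for each integer n ≥ 1 let k_n = ⌊log n / log(1/α)⌋. Then ((α n)^p − 1)/(1 − α^p) ≤ ∑_{k=1}^{k_n} ⌈α^{−k}⌉^p ≤ (1 + α)^p (n^p − 1)/(1 − α^p), where ⌈x⌉ denotes the ceiling of the real number x. In particular, the total weight-recomputation cost C_W(n) = ∑_{k=1}^{k_n} ⌈α^{−k}⌉^p of exponentially spaced replenishment times n_k* = ⌈α^{−k}⌉ grows on the order n^p. -/
open Real Finset


/-- **Cost of exponentially spaced replenishment times.** For `α ∈ (0,1)`,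
`p ≥ 1` and `n ≥ 1`, with `k_n = ⌊log n / log(1/α)⌋`, the total
weight-recomputation cost `C_W(n) = ∑_{k=1}^{k_n} ⌈α^{−k}⌉^p` satisfies
`((α n)^p − 1)/(1 − α^p) ≤ C_W(n) ≤ (1 + α)^p (n^p − 1)/(1 − α^p)`,
hence it grows on the order `n^p`. -/
theorem replenishment_cost_bounds
    (α : ℝ) (hα : α ∈ Set.Ioo (0 : ℝ) 1) (p : ℝ) (hp : 1 ≤ p)
    (n : ℕ) (hn : 1 ≤ n) :
    ((α * (n : ℝ)) ^ p - 1) / (1 - α ^ p)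
        ≤ ∑ k ∈ Finset.Icc 1 ⌊Real.log n / Real.log (1 / α)⌋₊,
            ((⌈α⁻¹ ^ k⌉ : ℝ)) ^ p ∧
    ∑ k ∈ Finset.Icc 1 ⌊Real.log n / Real.log (1 / α)⌋₊,
        ((⌈α⁻¹ ^ k⌉ : ℝ)) ^ p
      ≤ (1 + α) ^ p * ((n : ℝ) ^ p - 1) / (1 - α ^ p) := by
  obtain ⟨hα0, hα1⟩ := hα
  have hβ1 : 1 < α⁻¹ := one_lt_inv₀ hα0 |>.2 hα1
  have hβ0 : (0:ℝ) < α⁻¹ := by positivity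
  set β := α⁻¹ with hβdef
  set K := ⌊Real.log n / Real.log (1/α)⌋₊ with hK
  have hKL : K = ⌊Real.log n / Real.log β⌋₊ := by rw [hK, one_div]
  have hlogβ : 0 < Real.log β := Real.log_pos hβ1
  have hn1 : (1:ℝ) ≤ (n:ℝ) := by exact_mod_cast hn
  have hn0 : (0:ℝ) < (n:ℝ) := by linarith
  have hp0 : (0:ℝ) < p := by linarith
  set r := β ^ p with hr
  have hr1 : 1 < r := Real.one_lt_rpow_iff_of_pos hβ0 |>.2 (Or.inl ⟨hβ1, hp0⟩)
  have hr0 : (0:ℝ) < r := by linarith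
  have hpow : ∀ k : ℕ, (β ^ k) ^ p = r ^ k := by
    intro k
    rw [← Real.rpow_natCast β k, ← Real.rpow_natCast r k, hr,
      ← Real.rpow_mul hβ0.le, ← Real.rpow_mul hβ0.le, mul_comm]
  have hαp1 : α ^ p < 1 := Real.rpow_lt_one hα0.le hα1 hp0
  have hαp0 : 0 < α ^ p := Real.rpow_pos_of_pos hα0 p
  have hαpr : α ^ p * r = 1 := by
    rw [hr, ← Real.mul_rpow hα0.le hβ0.le, mul_inv_cancel₀ hα0.ne', Real.one_rpow]
  have hden : (0:ℝ) < 1 - α ^ p := by linarith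
  -- β^(K+1) > n and β^K ≤ n
  have hnβ : (n : ℝ) < β ^ (K + 1) := by
    have h1 : Real.log n / Real.log β < K + 1 := by
      rw [hKL]; push_cast; exact Nat.lt_floor_add_one _
    have h2 : Real.log n < (K + 1 : ℕ) * Real.log β := by
      rw [div_lt_iff₀ hlogβ] at h1; push_cast; push_cast at h1; linarith
    rw [← Real.log_pow] at h2
    exact (Real.log_lt_log_iff hn0 (by positivity)).1 h2
  have hβn : β ^ K ≤ (n : ℝ) := by
    have h1 : (K : ℝ) ≤ Real.log n / Real.log β := by
      rw [hKL]; exact Nat.floor_le (by positivity)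
    have h2 : (K : ℕ) * Real.log β ≤ Real.log n := by
      rw [le_div_iff₀ hlogβ] at h1; linarith
    rw [← Real.log_pow] at h2
    exact (Real.log_le_log_iff (by positivity) hn0).1 h2
  -- geometric sum
  have hgeom : ∑ k ∈ Finset.Icc 1 K, r ^ k = (r ^ K - 1) / (1 - α ^ p) := by
    rw [← Finset.Ico_add_one_right_eq_Icc, geom_sum_Ico hr1.ne' (Nat.le_add_left 1 K)]
    have hαp : α ^ p = 1 / r := by field_simp; linarith [hαpr]
    rw [hαp, pow_succ]
    field_simp
  constructor
  · -- lower bound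
    have hsum : ∑ k ∈ Finset.Icc 1 K, r ^ k
        ≤ ∑ k ∈ Finset.Icc 1 K, ((⌈β ^ k⌉ : ℝ)) ^ p := by
      apply Finset.sum_le_sum
      intro k _
      have h1 : (β ^ k : ℝ) ≤ (⌈β ^ k⌉ : ℝ) := Int.le_ceil _
      calc r ^ k = (β ^ k) ^ p := (hpow k).symm
        _ ≤ ((⌈β ^ k⌉ : ℝ)) ^ p := Real.rpow_le_rpow (by positivity) h1 hp0.le
    refine le_trans ?_ hsum
    rw [hgeom, div_le_div_iff₀ hden hden]
    have hαn : (α * n) ^ p ≤ r ^ K := by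
      have h1 : α * n ≤ β ^ K := by
        have : α * (n:ℝ) < α * β ^ (K+1) := by
          exact mul_lt_mul_of_pos_left hnβ hα0
        rw [pow_succ] at this
        calc α * (n:ℝ) ≤ α * (β ^ K * β) := this.le
          _ = β ^ K * (α * β) := by ring
          _ = β ^ K := by rw [mul_inv_cancel₀ hα0.ne', mul_one]
      calc (α * n) ^ p ≤ (β ^ K) ^ p :=
            Real.rpow_le_rpow (by positivity) h1 hp0.le
        _ = r ^ K := hpow K
    nlinarith [hαn]
  · -- upper bound
    have hsum : ∑ k ∈ Finset.Icc 1 K, ((⌈β ^ k⌉ : ℝ)) ^ p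
        ≤ ∑ k ∈ Finset.Icc 1 K, (1 + α) ^ p * r ^ k := by
      apply Finset.sum_le_sum
      intro k hk
      have hk1 : 1 ≤ k := (Finset.mem_Icc.1 hk).1
      have hc : (⌈β ^ k⌉ : ℝ) ≤ (1 + α) * β ^ k := by
        have h1 : (⌈β ^ k⌉ : ℝ) < β ^ k + 1 := Int.ceil_lt_add_one _
        have h2 : (1:ℝ) ≤ α * β ^ k := by
          have : β ≤ β ^ k := le_self_pow₀ hβ1.le (by omega)
          calc (1:ℝ) = α * β := (mul_inv_cancel₀ hα0.ne').symm
            _ ≤ α * β ^ k := by nlinarith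
        nlinarith
      calc ((⌈β ^ k⌉ : ℝ)) ^ p ≤ ((1 + α) * β ^ k) ^ p :=
            Real.rpow_le_rpow (by positivity) hc hp0.le
        _ = (1 + α) ^ p * (β ^ k) ^ p := Real.mul_rpow (by linarith) (by positivity)
        _ = (1 + α) ^ p * r ^ k := by rw [hpow k]
    refine le_trans hsum ?_
    rw [← Finset.mul_sum, hgeom]
    have hnp : r ^ K ≤ (n : ℝ) ^ p := by
      calc r ^ K = (β ^ K) ^ p := (hpow K).symm
        _ ≤ (n : ℝ) ^ p := Real.rpow_le_rpow (by positivity) hβn hp0.le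
    have h1α : (0:ℝ) ≤ (1 + α) ^ p := by positivity
    rw [mul_div_assoc]
    gcongr
end
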